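/- For every nonzero complex number q with |q| < 1, Σ_{m≥1} Σ_{n≥1} (−1)^{m−1} q^{2mn} (q^{−m} − q^{m−1}) / ((1+q^{2n−1})(1−q^{2m−1})) = Σ_{n≥1} q^{2n−1}/(1+q^{2n−1})^2. -/

import Mathlib

lemma theta3_aux_pow_lt (q : ℂ) (hq : ‖q‖ < 1) (k : ℕ) (hk : 1 ≤ k) : ‖q ^ k‖ < 1 := by
  rw [norm_pow]
  calc ‖q‖ ^ k ≤ ‖q‖ ^ 1 := pow_le_pow_of_le_one (norm_nonneg q) hq.le hk
  _ = ‖q‖ := pow_one _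
  _ < 1 := hq

lemma theta3_aux_one_add_ne (q : ℂ) (hq : ‖q‖ < 1) (k : ℕ) (hk : 1 ≤ k) :
    1 + q ^ k ≠ 0 := by
  intro h
  have h1 : q ^ k = -1 := by linear_combination h
  have := theta3_aux_pow_lt q hq k hk
  rw [h1] at this
  simp at this

lemma theta3_aux_one_sub_ne (q : ℂ) (hq : ‖q‖ < 1) (k : ℕ) (hk : 1 ≤ k) :
    1 - q ^ k ≠ 0 := by
  intro h
  have h1 : q ^ k = 1 := by linear_combination -h
  have := theta3_aux_pow_lt q hq k hk
  rw [h1] at this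
  simp at this

lemma theta3_aux_norm_one_add (q : ℂ) (hq : ‖q‖ < 1) (k : ℕ) (hk : 1 ≤ k) :
    1 - ‖q‖ ≤ ‖1 + q ^ k‖ := by
  have h1 : ‖q ^ k‖ ≤ ‖q‖ := by
    rw [norm_pow]
    calc ‖q‖ ^ k ≤ ‖q‖ ^ 1 := pow_le_pow_of_le_one (norm_nonneg q) hq.le hk
    _ = ‖q‖ := pow_one _
  calc 1 - ‖q‖ ≤ 1 - ‖q ^ k‖ := by linarith
  _ ≤ ‖1 + q ^ k‖ := by
      have h2 : ‖(1 : ℂ)‖ ≤ ‖1 + q ^ k‖ + ‖q ^ k‖ := by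
        simpa using norm_add_le (1 + q ^ k) (-(q ^ k))
      rw [norm_one] at h2
      linarith

/-- The summable majorant. -/
lemma theta3_aux_summable (q : ℂ) (hq : ‖q‖ < 1) :
    Summable (Function.uncurry fun m n : ℕ =>
      (-1 : ℂ) ^ m * (q ^ (2 * n + 1)) ^ (m + 1) / (1 + q ^ (2 * n + 1))) := by
  have hq0 : (0:ℝ) ≤ ‖q‖ := norm_nonneg q
  have hden : (0:ℝ) < 1 - ‖q‖ := by linarith
  set C : ℝ := ‖q‖ / (1 - ‖q‖) with hC
  have hmaj : Summable (fun p : ℕ × ℕ => C * (‖q‖ ^ p.1 * ‖q‖ ^ p.2)) := by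
    refine Summable.mul_left C ?_
    exact (summable_geometric_of_lt_one hq0 hq).mul_of_nonneg
      (summable_geometric_of_lt_one hq0 hq)
      (fun m => pow_nonneg hq0 m) (fun n => pow_nonneg hq0 n)
  refine Summable.of_norm_bounded hmaj ?_
  rintro ⟨m, n⟩
  simp only [Function.uncurry]
  rw [norm_div, norm_mul, norm_pow, norm_pow, norm_neg, norm_one, one_pow, one_mul,
    norm_pow]
  have hb : 1 - ‖q‖ ≤ ‖1 + q ^ (2 * n + 1)‖ :=
    theta3_aux_norm_one_add q hq (2 * n + 1) (by omega)
  have hnum : (‖q‖ ^ (2 * n + 1)) ^ (m + 1) ≤ ‖q‖ ^ (m + n + 1) := by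
    rw [← pow_mul]
    exact pow_le_pow_of_le_one hq0 hq.le (by nlinarith)
  have hpos : (0:ℝ) < ‖1 + q ^ (2 * n + 1)‖ := lt_of_lt_of_le hden hb
  calc (‖q‖ ^ (2 * n + 1)) ^ (m + 1) / ‖1 + q ^ (2 * n + 1)‖
      ≤ ‖q‖ ^ (m + n + 1) / (1 - ‖q‖) := by
        apply div_le_div₀ (pow_nonneg hq0 _) hnum hden hb
  _ = C * (‖q‖ ^ m * ‖q‖ ^ n) := by
        rw [hC]
        rw [show m + n + 1 = 1 + (m + n) from by ring, pow_add, pow_add, pow_one]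
        ring

/-- `Σ_{m,n≥1} (−1)^{m−1} q^{2mn} (q^{−m} − q^{m−1}) / ((1+q^{2n−1})(1−q^{2m−1}))
      = Σ_{n≥1} q^{2n−1}/(1+q^{2n−1})^2`,
where `q^{−m}` and `q^{m−1}` are integer powers (`zpow`), legitimate since `q ≠ 0`. -/
theorem theta3_log_derivative_identity (q : ℂ) (hq : ‖q‖ < 1) (hq0 : q ≠ 0) :
    ∑' m : ℕ, ∑' n : ℕ,
        (-1 : ℂ) ^ m * q ^ (2 * (m + 1) * (n + 1))
          * (q ^ (-((m : ℤ) + 1)) - q ^ (((m : ℤ) + 1) - 1))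
          / ((1 + q ^ (2 * (n + 1) - 1)) * (1 - q ^ (2 * (m + 1) - 1)))
    = ∑' n : ℕ, q ^ (2 * (n + 1) - 1) / (1 + q ^ (2 * (n + 1) - 1)) ^ 2 := by
  set f : ℕ → ℕ → ℂ := fun m n =>
    (-1 : ℂ) ^ m * (q ^ (2 * n + 1)) ^ (m + 1) / (1 + q ^ (2 * n + 1)) with hf
  -- Step 1: termwise simplification
  have key : ∀ m n : ℕ,
      (-1 : ℂ) ^ m * q ^ (2 * (m + 1) * (n + 1))
        * (q ^ (-((m : ℤ) + 1)) - q ^ (((m : ℤ) + 1) - 1))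
        / ((1 + q ^ (2 * (n + 1) - 1)) * (1 - q ^ (2 * (m + 1) - 1))) = f m n := by
    intro m n
    have hA : (1 + q ^ (2 * (n + 1) - 1)) ≠ 0 :=
      theta3_aux_one_add_ne q hq _ (by omega)
    have hB : (1 - q ^ (2 * (m + 1) - 1)) ≠ 0 :=
      theta3_aux_one_sub_ne q hq _ (by omega)
    have hz1 : q ^ (-((m : ℤ) + 1)) = (q ^ (m + 1))⁻¹ := by
      rw [zpow_neg]
      norm_cast
    have hz2 : q ^ (((m : ℤ) + 1) - 1) = q ^ (m : ℕ) := by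
      norm_num
    have e1 : 2 * (n + 1) - 1 = 2 * n + 1 := by omega
    have e2 : 2 * (m + 1) - 1 = 2 * m + 1 := by omega
    rw [hz1, hz2, e1, e2, hf]
    have hqm : q ^ (m + 1) ≠ 0 := pow_ne_zero _ hq0
    rw [e2] at hB
    have h1 : q ^ (2 * (m + 1) * (n + 1)) = (q ^ (2 * n + 1)) ^ (m + 1) * q ^ (m + 1) := by
      rw [← pow_mul, ← pow_add]
      congr 1
      ring
    have hnum : q ^ (2 * (m + 1) * (n + 1)) * ((q ^ (m + 1))⁻¹ - q ^ m)
        = (q ^ (2 * n + 1)) ^ (m + 1) * (1 - q ^ (2 * m + 1)) := by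
      rw [mul_sub, h1, mul_inv_cancel_right₀ hqm, ← pow_mul, ← pow_add, ← pow_add,
        mul_sub, mul_one, ← pow_add]
      congr 2
      ring
    rw [mul_assoc, hnum, ← mul_assoc, mul_div_mul_right _ _ hB]
  have hsum := theta3_aux_summable q hq
  calc ∑' m : ℕ, ∑' n : ℕ,
        (-1 : ℂ) ^ m * q ^ (2 * (m + 1) * (n + 1))
          * (q ^ (-((m : ℤ) + 1)) - q ^ (((m : ℤ) + 1) - 1))
          / ((1 + q ^ (2 * (n + 1) - 1)) * (1 - q ^ (2 * (m + 1) - 1)))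
      = ∑' m : ℕ, ∑' n : ℕ, f m n := by
        exact tsum_congr fun m => tsum_congr fun n => key m n
  _ = ∑' n : ℕ, ∑' m : ℕ, f m n := (Summable.tsum_comm hsum).symm
  _ = ∑' n : ℕ, q ^ (2 * (n + 1) - 1) / (1 + q ^ (2 * (n + 1) - 1)) ^ 2 := by
      refine tsum_congr fun n => ?_
      set x : ℂ := q ^ (2 * n + 1) with hx
      have hxn : ‖x‖ < 1 := theta3_aux_pow_lt q hq _ (by omega)
      have hX : (1 + x) ≠ 0 := theta3_aux_one_add_ne q hq _ (by omega)
      have e1 : 2 * (n + 1) - 1 = 2 * n + 1 := by omega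
      have hterm : ∀ m : ℕ, f m n = x / (1 + x) * (-x) ^ m := by
        intro m
        rw [hf]
        simp only [← hx]
        rw [neg_pow]
        rw [pow_succ]
        ring
      rw [tsum_congr hterm, tsum_mul_left]
      have hgeo : ∑' m : ℕ, (-x) ^ m = (1 + x)⁻¹ := by
        rw [tsum_geometric_of_norm_lt_one (by simpa using hxn)]
        congr 1
        ring
      rw [hgeo, e1, ← hx, div_eq_mul_inv, mul_assoc, ← mul_inv, ← sq, ← div_eq_mul_inv]
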